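/- If D : S → M is a Jordan (δ,f)-derivation on a 2-torsion-free bimodule M, then (D(xy) − D(x)y − f(x)δ(y))(xy − yx) = 0 for all x, y ∈ S. -/
import Mathlib


open MulOpposite

/-- For a Jordan `(δ,f)`-derivation `D` on a `2`-torsion-free bimodule `M`,
`(D(xy) − D(x)y − f(x)δ(y))(xy − yx) = 0`. -/
theorem jordan_derivation_commutator_annihilation
    {R S M : Type*} [CommRing R] [Ring S] [Algebra R S]
    [AddCommGroup M] [Module S M] [Module Sᵐᵒᵖ M] [SMulCommClass S Sᵐᵒᵖ M]
    (htf : ∀ m : M, 2 • m = 0 → m = 0)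
    (δ : S → S) (hδadd : ∀ a b : S, δ (a + b) = δ a + δ b)
    (hδmul : ∀ a b : S, δ (a * b) = δ a * b + a * δ b)
    (f : S → M) (hfadd : ∀ a b : S, f (a + b) = f a + f b)
    (hfleft : ∀ a x : S, f (a * x) = a • f x)
    (hfright : ∀ x a : S, f (x * a) = op a • f x)
    (D : S → M) (hDadd : ∀ a b : S, D (a + b) = D a + D b)
    (hJordan : ∀ x : S, D (x * x) = op x • D x + op (δ x) • f x) :
    ∀ x y : S,
      op (x * y - y * x) • (D (x * y) - op y • D x - op (δ y) • f x) = 0 := by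
  -- Linearization of the Jordan condition
  have hL1 : ∀ x y : S, D (x * y) + D (y * x) =
      op y • D x + op x • D y + op (δ y) • f x + op (δ x) • f y := by
    intro x y
    have h := hJordan (x + y)
    rw [show (x + y) * (x + y) = x * x + (x * y + y * x) + y * y from by noncomm_ring] at h
    simp only [hDadd, hJordan, hδadd, hfadd, op_add, add_smul, smul_add] at h
    rw [← sub_eq_zero] at h ⊢
    rw [← h]
    abel
  -- Antisymmetry form
  have hanti : ∀ x y : S, D (y * x) =
      (op y • D x + op x • D y + op (δ y) • f x + op (δ x) • f y) - D (x * y) := by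
    intro x y
    exact eq_sub_of_add_eq' (hL1 x y)
  -- Triple product formula
  have trip : ∀ x y : S, D (x * y * x) =
      op (y * x) • D x + op (δ y * x) • f x + op (y * δ x) • f x := by
    intro x y
    have h1 := hL1 x (x * y + y * x)
    have h2 := hL1 (x * x) y
    rw [show x * (x * y + y * x) = x * x * y + x * y * x from by noncomm_ring,
        show (x * y + y * x) * x = x * y * x + y * (x * x) from by noncomm_ring] at h1
    simp only [hDadd, hJordan, hanti x y, hδadd, hδmul, hfadd, hfright,
      op_add, op_sub, add_smul, sub_smul, smul_add, smul_sub, smul_smul,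
      add_mul, mul_add, sub_mul, mul_sub, ← op_mul, mul_assoc] at h1 h2
    simp only [mul_assoc]
    refine sub_eq_zero.mp (htf _ ?_)
    replace h2 := h2.symm
    rw [← sub_eq_zero] at h1 h2
    rw [← h1]
    rw [← sub_eq_zero, ← h2]
    abel
  intro x y
  have h4 := hL1 x (y * x * y)
  rw [show x * (y * x * y) = (x * y) * (x * y) from by noncomm_ring,
      show (y * x * y) * x = (y * x) * (y * x) from by noncomm_ring,
      hJordan (x * y), hJordan (y * x), trip y x, hanti x y] at h4
  simp only [hδadd, hδmul, hfadd, hfright, op_add, op_sub, add_smul, sub_smul,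
    smul_add, smul_sub, smul_smul, add_mul, mul_add, sub_mul, mul_sub,
    ← op_mul, mul_assoc] at h4
  rw [← sub_eq_zero] at h4
  simp only [op_sub, sub_smul, smul_add, smul_sub, smul_smul, add_mul, mul_add,
    sub_mul, mul_sub, ← op_mul, mul_assoc]
  rw [← h4]
  abel
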